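/- Let $T$ be a finite set, $\mathcal{G} = \{G_n\}$ a hyperfinite sequence of proper $T$-labeled directed graphs, and $l \in \mathbb{N}_+$ a constant. Let $\mathcal{H} = \{G_n^l\}$ be the diagonal product sequence: $V(G_n^l) = V(G_n)^l$, and $(x_1,\dots,x_l)$ is joined to $(y_1,\dots,y_l)$ by an edge labeled $t \in T$ iff $(x_i,y_i)$ is an edge of $G_n$ labeled $t$ for every $i$. Then $\mathcal{H}$ is hyperfinite. -/

import Mathlib

/-- Elek's hyperfiniteness for a sequence of finite `T`-labeled directed graphs:
edges are triples `(x, t, y)` (an edge from `x` to `y` labeled `t`), and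
crossing edges of a partition are counted with labels. -/
def HyperfiniteLab (T : Type) (V : ℕ → Type) [∀ n, Fintype (V n)]
    (E : (n : ℕ) → Set (V n × T × V n)) : Prop :=
  ∀ ε : ℝ, 0 < ε → ∃ K : ℕ, 0 < K ∧ ∃ P : (n : ℕ) → V n → ℕ,
    (∀ n i, {v : V n | P n v = i}.ncard ≤ K) ∧
    Filter.limsup
      (fun n => ({e ∈ E n | P n e.1 ≠ P n e.2.2}.ncard : ℝ) / Fintype.card (V n))
      Filter.atTop < ε


lemma prod_cross_card {V T : Type} [Fintype V] [Fintype T] (E : Set (V × T × V))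
    (hprop : ∀ (x y y' : V) (t : T), (x, t, y) ∈ E → (x, t, y') ∈ E → y = y')
    (m : ℕ) (P : V → ℕ) :
    {e : (Fin (m+1) → V) × T × (Fin (m+1) → V) |
        (∀ i, (e.1 i, e.2.1, e.2.2 i) ∈ E) ∧ ∃ i, P (e.1 i) ≠ P (e.2.2 i)}.ncard
      ≤ (m+1) * {e ∈ E | P e.1 ≠ P e.2.2}.ncard * Fintype.card V ^ m := by
  classical
  set S := {e : (Fin (m+1) → V) × T × (Fin (m+1) → V) |
      (∀ i, (e.1 i, e.2.1, e.2.2 i) ∈ E) ∧ ∃ i, P (e.1 i) ≠ P (e.2.2 i)} with hS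
  set C := {e ∈ E | P e.1 ≠ P e.2.2} with hC
  have hmem : ∀ e : S, (∀ i, (e.1.1 i, e.1.2.1, e.1.2.2 i) ∈ E)
      ∧ ∃ i, P (e.1.1 i) ≠ P (e.1.2.2 i) := fun e => e.2
  let idx : S → Fin (m+1) := fun e => (hmem e).2.choose
  have hidx : ∀ e : S, P (e.1.1 (idx e)) ≠ P (e.1.2.2 (idx e)) := fun e => (hmem e).2.choose_spec
  let φ : S → Fin (m+1) × C × (Fin m → V) := fun e =>
    ⟨idx e, ⟨(e.1.1 (idx e), e.1.2.1, e.1.2.2 (idx e)), (hmem e).1 (idx e), hidx e⟩,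
      fun j => e.1.1 ((idx e).succAbove j)⟩
  have hinj : Function.Injective φ := by
    rintro ⟨⟨x, t, y⟩, hx⟩ ⟨⟨x', t', y'⟩, hx'⟩ h
    simp only [φ, Prod.mk.injEq, Subtype.mk.injEq] at h
    obtain ⟨hi, ⟨hx1, ht, hy1⟩, hrest⟩ := h
    have hxx : x = x' := by
      funext j
      rcases eq_or_ne j (idx ⟨(x, t, y), hx⟩) with hj | hne
      · rw [hj, hx1, hi]
      · obtain ⟨k, hk⟩ := Fin.exists_succAbove_eq hne
        have h2 := congrFun hrest k
        rw [← hk, h2, hi]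
    have hyy : y = y' := by
      funext j
      have h1 : (x j, t, y j) ∈ E := (hmem ⟨(x, t, y), hx⟩).1 j
      have h2 : (x j, t, y' j) ∈ E := by
        rw [hxx, ht]; exact (hmem ⟨(x', t', y'), hx'⟩).1 j
      exact hprop _ _ _ _ h1 h2
    exact Subtype.ext (by simp [hxx, ht, hyy])
  calc S.ncard = Nat.card S := (Nat.card_coe_set_eq _).symm
    _ ≤ Nat.card (Fin (m+1) × C × (Fin m → V)) := Nat.card_le_card_of_injective φ hinj
    _ = (m+1) * C.ncard * Fintype.card V ^ m := by
        rw [Nat.card_prod, Nat.card_prod, Nat.card_eq_fintype_card (α := Fin (m+1)),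
          Fintype.card_fin, Nat.card_coe_set_eq, Nat.card_fun,
          Nat.card_eq_fintype_card (α := V), Nat.card_eq_fintype_card (α := Fin m),
          Fintype.card_fin, mul_assoc]

lemma cross_card_le {V T : Type} [Fintype V] [Fintype T] (E : Set (V × T × V))
    (hprop : ∀ (x y y' : V) (t : T), (x, t, y) ∈ E → (x, t, y') ∈ E → y = y')
    (P : V → ℕ) :
    {e ∈ E | P e.1 ≠ P e.2.2}.ncard ≤ Fintype.card T * Fintype.card V := by
  calc {e ∈ E | P e.1 ≠ P e.2.2}.ncard ≤ E.ncard :=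
        Set.ncard_le_ncard (Set.sep_subset _ _) (Set.toFinite _)
    _ = Nat.card E := (Nat.card_coe_set_eq _).symm
    _ ≤ Nat.card (T × V) := by
        apply Nat.card_le_card_of_injective (fun e => (e.1.2.1, e.1.1))
        rintro ⟨⟨x, t, y⟩, he⟩ ⟨⟨x', t', y'⟩, he'⟩ h
        simp only [Prod.mk.injEq] at h
        obtain ⟨ht, hx⟩ := h
        subst ht; subst hx
        exact Subtype.ext (by simp [hprop _ _ _ _ he he'])
    _ = Fintype.card T * Fintype.card V := by
        rw [Nat.card_prod, Nat.card_eq_fintype_card, Nat.card_eq_fintype_card]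

/-- The constant-exponent diagonal product of a hyperfinite sequence of proper
`T`-labeled directed graphs is hyperfinite: the product graph on `V(G_n)^l` has
an edge `(x, t, y)` iff `(x i, t, y i)` is an edge of `G_n` for every `i`. -/
theorem stmt16 (T : Type) [Fintype T] (V : ℕ → Type) [∀ n, Fintype (V n)]
    (E : (n : ℕ) → Set (V n × T × V n))
    (hproper : ∀ n (x y y' : V n) (t : T),
      (x, t, y) ∈ E n → (x, t, y') ∈ E n → y = y')
    (l : ℕ) (hl : 1 ≤ l)
    (hG : HyperfiniteLab T V E) :
    HyperfiniteLab T (fun n => Fin l → V n)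
      (fun n => {e | ∀ i : Fin l, (e.1 i, e.2.1, e.2.2 i) ∈ E n}) := by
  obtain ⟨m, rfl⟩ : ∃ m, l = m + 1 := ⟨l - 1, (Nat.succ_pred_eq_of_pos hl).symm⟩
  intro ε hε
  have hm1 : (0 : ℝ) < (m : ℝ) + 1 := by positivity
  have hε' : 0 < ε / (2 * ((m : ℝ) + 1)) := by positivity
  obtain ⟨K, hK, P, hPsize, hPlim⟩ := hG _ hε'
  refine ⟨K ^ (m + 1), pow_pos hK _,
    fun n x => Encodable.encode (fun i => P n (x i)), ?_, ?_⟩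
  · -- blocks have size at most K^(m+1)
    intro n i
    rcases Set.eq_empty_or_nonempty
        {x : Fin (m+1) → V n | Encodable.encode (fun j => P n (x j)) = i} with h | ⟨x0, hx0⟩
    · simp [h]
    · have hsub : {x : Fin (m+1) → V n | Encodable.encode (fun j => P n (x j)) = i}
          ⊆ Set.univ.pi (fun j => {v : V n | P n v = P n (x0 j)}) := by
        intro x hx
        rw [Set.mem_univ_pi]
        intro j
        have heq : (fun j => P n (x j)) = fun j => P n (x0 j) :=
          Encodable.encode_injective ((hx : _ = i).trans (hx0 : _ = i).symm)
        exact congrFun heq j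
      calc {x : Fin (m+1) → V n | Encodable.encode (fun j => P n (x j)) = i}.ncard
          ≤ (Set.univ.pi fun j => {v : V n | P n v = P n (x0 j)}).ncard :=
            Set.ncard_le_ncard hsub (Set.toFinite _)
        _ = ∏ j, {v : V n | P n v = P n (x0 j)}.ncard := by
            rw [← Nat.card_coe_set_eq, Nat.card_congr (Equiv.Set.univPi _), Nat.card_pi]
            exact Finset.prod_congr rfl fun j _ => Nat.card_coe_set_eq _
        _ ≤ ∏ _j : Fin (m+1), K := Finset.prod_le_prod' fun j _ => hPsize n (P n (x0 j))
        _ = K ^ (m + 1) := by simp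
  · -- the limsup estimate
    have hf0 : ∀ k, (0:ℝ) ≤ ({e ∈ E k | P k e.1 ≠ P k e.2.2}.ncard : ℝ) / Fintype.card (V k) :=
      fun k => by positivity
    have hfT : ∀ k, ({e ∈ E k | P k e.1 ≠ P k e.2.2}.ncard : ℝ) / Fintype.card (V k)
        ≤ Fintype.card T := by
      intro k
      rcases Nat.eq_zero_or_pos (Fintype.card (V k)) with h | h
      · rw [h]; simp
      · rw [div_le_iff₀ (by exact_mod_cast h)]
        exact_mod_cast cross_card_le (E k) (hproper k) (P k)
    have hev : ∀ᶠ k in Filter.atTop,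
        ({e ∈ E k | P k e.1 ≠ P k e.2.2}.ncard : ℝ) / Fintype.card (V k)
          < ε / (2 * ((m : ℝ) + 1)) :=
      Filter.eventually_lt_of_limsup_lt hPlim (Filter.isBoundedUnder_of ⟨_, hfT⟩)
    refine lt_of_le_of_lt (Filter.limsup_le_of_le
        (Filter.isCoboundedUnder_le_of_le Filter.atTop (x := 0) (fun k => by positivity)) ?_)
      (show ε / 2 < ε by linarith)
    filter_upwards [hev] with k hk
    -- pointwise estimate
    set C := {e ∈ E k | P k e.1 ≠ P k e.2.2} with hC
    have hsets : {e ∈ {e : (Fin (m+1) → V k) × T × (Fin (m+1) → V k) |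
            ∀ i, (e.1 i, e.2.1, e.2.2 i) ∈ E k} |
          Encodable.encode (fun i => P k (e.1 i)) ≠ Encodable.encode (fun i => P k (e.2.2 i))}
        = {e : (Fin (m+1) → V k) × T × (Fin (m+1) → V k) |
            (∀ i, (e.1 i, e.2.1, e.2.2 i) ∈ E k) ∧ ∃ i, P k (e.1 i) ≠ P k (e.2.2 i)} := by
      ext e
      have hne : (¬(fun i => P k (e.1 i)) = fun i => P k (e.2.2 i))
          ↔ ∃ i, ¬ P k (e.1 i) = P k (e.2.2 i) := Function.ne_iff
      simp only [Set.mem_setOf_eq, ne_eq, Encodable.encode_inj, hne]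
    have hcount := prod_cross_card (E k) (hproper k) m (P k)
    rcases Nat.eq_zero_or_pos (Fintype.card (V k)) with h | h
    · have hz : Fintype.card (Fin (m+1) → V k) = 0 := by
        rw [Fintype.card_fun, h]
        simp
      rw [hz, Nat.cast_zero, div_zero]
      positivity
    · have hc : (0:ℝ) < Fintype.card (V k) := by exact_mod_cast h
      have hcard : (Fintype.card (Fin (m+1) → V k) : ℝ) = (Fintype.card (V k) : ℝ) ^ (m+1) := by
        rw [Fintype.card_fun]
        push_cast
        simp
      have hle : ({e ∈ {e : (Fin (m+1) → V k) × T × (Fin (m+1) → V k) |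
            ∀ i, (e.1 i, e.2.1, e.2.2 i) ∈ E k} |
          Encodable.encode (fun i => P k (e.1 i)) ≠ Encodable.encode (fun i => P k (e.2.2 i))}.ncard : ℝ)
          ≤ ((m:ℝ)+1) * C.ncard * (Fintype.card (V k) : ℝ) ^ m := by
        rw [hsets]
        exact_mod_cast hcount
      have hfk : ((m:ℝ)+1) * (((C.ncard : ℝ)) / Fintype.card (V k)) ≤ ((m:ℝ)+1) * (ε / (2 * ((m : ℝ) + 1))) :=
        mul_le_mul_of_nonneg_left (le_of_lt hk) (by positivity)
      have heq2 : ((m:ℝ)+1) * (ε / (2 * ((m : ℝ) + 1))) = ε / 2 := by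
        field_simp
      rw [div_le_iff₀ (by rw [hcard]; positivity)]
      calc ({e ∈ _ | _}.ncard : ℝ) ≤ ((m:ℝ)+1) * C.ncard * (Fintype.card (V k) : ℝ) ^ m := hle
        _ = ((m:ℝ)+1) * ((C.ncard : ℝ) / Fintype.card (V k)) * (Fintype.card (V k) : ℝ) ^ (m+1) := by
            field_simp
            ring
        _ ≤ ε / 2 * (Fintype.card (V k) : ℝ) ^ (m+1) := by
            apply mul_le_mul_of_nonneg_right _ (by positivity)
            rw [← heq2]
            exact hfk
        _ = ε / 2 * (Fintype.card ((fun n => Fin (m+1) → V n) k) : ℝ) := by rw [hcard]
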